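/- Let d ≥ 2, α ∈ (0,1], m > 1, and let f belong to the unit ball of the mixed Hölder–Nikolskii space with zero boundary values on [0,1]^d. For k̄ = (k_2,...,k_d) ∈ ℕ_0^{d-1} and s̄ ∈ Z(k̄), define the univariate function K_{k̄,s̄}(f)(x_1) = ∏_{j=2}^d ( -(1/2) 2^{α(k_j+1)} Δ²_{2^{-k_j-1}} f(x_1, 2^{-k̄}s̄) ), where the second difference is applied in the j-th variable. Then K_{k̄,s̄}(f) lies in the unit ball of H^α_∞([0,1]) with zero boundary values, i.e. |K_{k̄,s̄}(f)(x+h) - K_{k̄,s̄}(f)(x)| ≤ h^α for all admissible x, h ≥ 0. -/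

import Mathlib

/-- The mixed Hölder condition `|Δ_{h,u} f(x)| ≤ ∏_{i∈u} h_i^α` on `[0,1]^d`. -/
def MixHolder (d : ℕ) (α : ℝ) (f : (Fin d → ℝ) → ℝ) : Prop :=
  ∀ u : Finset (Fin d), u.Nonempty → ∀ x h : Fin d → ℝ,
    (∀ i, 0 ≤ h i) → (∀ i, 0 ≤ x i) →
    (∀ i, x i + (if i ∈ u then h i else 0) ≤ 1) →
    |∑ v ∈ u.powerset, (-1 : ℝ) ^ (u.card - v.card) *
        f (fun i => x i + if i ∈ v then h i else 0)| ≤ ∏ i ∈ u, h i ^ α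

/-- Unit ball of the mixed Hölder–Nikolskii space with zero boundary values. -/
def UnitBallH (d : ℕ) (α : ℝ) (f : (Fin d → ℝ) → ℝ) : Prop :=
  ContinuousOn f (Set.Icc 0 1) ∧
  (∀ x ∈ Set.Icc (0 : Fin d → ℝ) 1, |f x| ≤ 1) ∧
  (∀ x ∈ Set.Icc (0 : Fin d → ℝ) 1, (∃ i, x i = 0 ∨ x i = 1) → f x = 0) ∧
  MixHolder d α f

/-- For a function of `d = e + 1` variables, the univariate function
`K_{k̄,s̄}(f)(x₁) = ∏_{j=2}^d ( -(1/2) 2^{α(k_j+1)} Δ²_{2^{-k_j-1}} f(x₁, 2^{-k̄}s̄) )`,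
written via the expansion of the `e`-fold second difference in the last `e` variables. -/
noncomputable def Kfun (e : ℕ) (α : ℝ) (f : (Fin (e + 1) → ℝ) → ℝ) (kb : Fin e → ℕ)
    (sb : (j : Fin e) → Fin (2 ^ kb j)) (x1 : ℝ) : ℝ :=
  (-(1 : ℝ) / 2) ^ e * (∏ j, (2 : ℝ) ^ (α * ((kb j : ℝ) + 1))) *
    ∑ ε : Fin e → Fin 3, (∏ j, (![(1 : ℝ), -2, 1]) (ε j)) *
      f (Fin.cons x1 fun j =>
        (2 : ℝ) ^ (-(kb j : ℝ)) * (sb j : ℝ) + (ε j : ℝ) * (2 : ℝ) ^ (-(kb j : ℝ) - 1))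

namespace S11
noncomputable section

def sgn (b : Bool) : ℝ := if b then 1 else -1

def cnt (q : Bool × Bool) : Fin 3 :=
  ⟨q.1.toNat + q.2.toNat, by cases q.1 <;> cases q.2 <;> decide⟩

lemma c_eq (i : Fin 3) :
    (∑ q ∈ Finset.univ.filter (fun q : Bool × Bool => cnt q = i), sgn q.1 * sgn q.2)
      = (![(1:ℝ), -2, 1]) i := by
  fin_cases i <;>
    simp [Finset.sum_filter, Fintype.sum_prod_type, Fintype.sum_bool, cnt, sgn, Fin.ext_iff] <;>
    norm_num

/-- Regrouping a sum over pairs of booleans by their count. -/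
lemma sum_fin3 (e : ℕ) (g : (Fin e → Fin 3) → ℝ) :
    ∑ p : Fin e → Bool × Bool, (∏ j, sgn (p j).1 * sgn (p j).2) * g (fun j => cnt (p j))
      = ∑ ε : Fin e → Fin 3, (∏ j, (![(1:ℝ), -2, 1]) (ε j)) * g ε := by
  rw [← Finset.sum_fiberwise_of_maps_to
    (g := fun p : Fin e → Bool × Bool => fun j => cnt (p j))
    (fun p _ => Finset.mem_univ _)]
  refine Finset.sum_congr rfl fun ε _ => ?_
  have h1 : ∀ p ∈ Finset.univ.filter
      (fun p : Fin e → Bool × Bool => (fun j => cnt (p j)) = ε),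
      (∏ j, sgn (p j).1 * sgn (p j).2) * g (fun j => cnt (p j))
        = (∏ j, sgn (p j).1 * sgn (p j).2) * g ε := by
    intro p hp
    rw [Finset.mem_filter] at hp
    rw [hp.2]
  rw [Finset.sum_congr rfl h1, ← Finset.sum_mul]
  congr 1
  have h2 : (Finset.univ.filter
      (fun p : Fin e → Bool × Bool => (fun j => cnt (p j)) = ε))
      = Fintype.piFinset (fun j => Finset.univ.filter fun q => cnt q = ε j) := by
    ext p
    simp [funext_iff]
  rw [h2, ← Finset.prod_univ_sum (fun j => Finset.univ.filter fun q => cnt q = ε j)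
    (fun _ q => sgn q.1 * sgn q.2)]
  exact Finset.prod_congr rfl fun j _ => c_eq (ε j)

lemma sgn_prod_eq (n : ℕ) (v : Finset (Fin n)) :
    (∏ i, sgn (decide (i ∈ v))) = (-1 : ℝ) ^ (n - v.card) := by
  have : ∀ i : Fin n, sgn (decide (i ∈ v)) = (-1 : ℝ) ^ (if i ∈ v then 0 else 1) := by
    intro i; by_cases h : i ∈ v <;> simp [sgn, h]
  rw [Finset.prod_congr rfl fun i _ => this i, Finset.prod_pow_eq_pow_sum]
  congr 1
  rw [Finset.sum_ite, Finset.sum_const, Finset.sum_const]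
  simp [Finset.filter_not, Finset.filter_mem_eq_inter]
  rw [Finset.card_sdiff, Finset.inter_univ, Finset.card_univ, Fintype.card_fin]

/-- Expand the alternating powerset sum as a sum over boolean vectors. -/
lemma powerset_expand (n : ℕ) (F : (Fin n → ℝ) → ℝ) (X H : Fin n → ℝ) :
    ∑ v ∈ (Finset.univ : Finset (Fin n)).powerset,
        (-1 : ℝ) ^ ((Finset.univ : Finset (Fin n)).card - v.card) *
          F (fun i => X i + if i ∈ v then H i else 0)
      = ∑ w : Fin n → Bool, (∏ i, sgn (w i)) *
          F (fun i => X i + if w i then H i else 0) := by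
  rw [Finset.card_univ, Fintype.card_fin]
  apply Finset.sum_nbij' (i := fun v => fun i => decide (i ∈ v))
    (j := fun w => Finset.univ.filter (fun i => w i = true))
  · intro v _; exact Finset.mem_univ _
  · intro w _; simp
  · intro v _; ext i; simp
  · intro w _; funext i; simp
  · intro v _
    rw [sgn_prod_eq]
    congr 2
    funext i
    simp

/-- The central algebraic identity. -/
lemma key (e : ℕ) (f : (Fin (e+1) → ℝ) → ℝ) (x h : ℝ) (base δ : Fin e → ℝ) :
    ∑ σ : Fin e → Bool, (∏ j, sgn (σ j)) *
      ∑ v ∈ (Finset.univ : Finset (Fin (e+1))).powerset,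
        (-1:ℝ) ^ ((Finset.univ : Finset (Fin (e+1))).card - v.card) *
          f (fun i => (Fin.cons x (fun j => base j + if σ j then δ j else 0) : Fin (e+1) → ℝ) i
              + if i ∈ v then (Fin.cons h δ : Fin (e+1) → ℝ) i else 0)
    = (∑ ε : Fin e → Fin 3, (∏ j, (![(1:ℝ),-2,1]) (ε j)) *
        f (Fin.cons (x+h) fun j => base j + (ε j : ℝ) * δ j))
      - ∑ ε : Fin e → Fin 3, (∏ j, (![(1:ℝ),-2,1]) (ε j)) *
        f (Fin.cons x fun j => base j + (ε j : ℝ) * δ j) := by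
  have hpt : ∀ (σ τ : Fin e → Bool) (b : Bool),
      (fun i => (Fin.cons x (fun j => base j + if σ j then δ j else 0) : Fin (e+1) → ℝ) i
          + if (Fin.cons b τ : Fin (e+1) → Bool) i then (Fin.cons h δ : Fin (e+1) → ℝ) i else 0)
        = (Fin.cons (x + if b then h else 0)
            (fun j => base j + ((cnt (σ j, τ j) : Fin 3) : ℝ) * δ j) : Fin (e+1) → ℝ) := by
    intro σ τ b
    funext i
    refine Fin.cases ?_ ?_ i
    · simp
    · intro j
      simp only [Fin.cons_succ]
      cases hσ : σ j <;> cases hτ : τ j <;> simp [cnt] <;> ring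
  have hA : ∀ σ : Fin e → Bool,
      (∑ v ∈ (Finset.univ : Finset (Fin (e+1))).powerset,
        (-1:ℝ) ^ ((Finset.univ : Finset (Fin (e+1))).card - v.card) *
          f (fun i => (Fin.cons x (fun j => base j + if σ j then δ j else 0) : Fin (e+1) → ℝ) i
              + if i ∈ v then (Fin.cons h δ : Fin (e+1) → ℝ) i else 0))
      = ∑ τ : Fin e → Bool, (∏ j, sgn (τ j)) *
          (f (Fin.cons (x+h) fun j => base j + ((cnt (σ j, τ j) : Fin 3) : ℝ) * δ j)
           - f (Fin.cons x fun j => base j + ((cnt (σ j, τ j) : Fin 3) : ℝ) * δ j)) := by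
    intro σ
    rw [powerset_expand]
    rw [← Equiv.sum_comp (Fin.consEquiv fun _ => Bool)
      (fun w : Fin (e+1) → Bool => (∏ i, sgn (w i)) *
        f (fun i => (Fin.cons x (fun j => base j + if σ j then δ j else 0) : Fin (e+1) → ℝ) i
            + if w i then (Fin.cons h δ : Fin (e+1) → ℝ) i else 0))]
    rw [Fintype.sum_prod_type]
    rw [Fintype.sum_bool]
    rw [← Finset.sum_add_distrib]
    refine Finset.sum_congr rfl fun τ _ => ?_
    have he1 : ∀ b : Bool,
        (Fin.consEquiv fun _ => Bool) (b, τ) = (Fin.cons b τ : Fin (e+1) → Bool) := fun b => rfl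
    rw [he1, he1, hpt σ τ true, hpt σ τ false]
    have hs : ∀ b : Bool,
        (∏ i, sgn ((Fin.cons b τ : Fin (e+1) → Bool) i)) = sgn b * ∏ j, sgn (τ j) := by
      intro b
      rw [Fin.prod_univ_succ]
      simp
    rw [hs, hs]
    simp [sgn]
    ring
  rw [Finset.sum_congr rfl fun σ _ => by rw [hA σ]]
  have hmul : ∀ σ : Fin e → Bool, (∏ j, sgn (σ j)) *
      (∑ τ : Fin e → Bool, (∏ j, sgn (τ j)) *
          (f (Fin.cons (x+h) fun j => base j + ((cnt (σ j, τ j) : Fin 3) : ℝ) * δ j)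
           - f (Fin.cons x fun j => base j + ((cnt (σ j, τ j) : Fin 3) : ℝ) * δ j)))
      = ∑ τ : Fin e → Bool, ((∏ j, sgn (σ j)) * (∏ j, sgn (τ j))) *
          (f (Fin.cons (x+h) fun j => base j + ((cnt (σ j, τ j) : Fin 3) : ℝ) * δ j)
           - f (Fin.cons x fun j => base j + ((cnt (σ j, τ j) : Fin 3) : ℝ) * δ j)) := by
    intro σ
    rw [Finset.mul_sum]
    exact Finset.sum_congr rfl fun τ _ => by ring
  rw [Finset.sum_congr rfl fun σ _ => hmul σ]
  rw [← Fintype.sum_prod_type (f := fun q : (Fin e → Bool) × (Fin e → Bool) =>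
        ((∏ j, sgn (q.1 j)) * (∏ j, sgn (q.2 j))) *
          (f (Fin.cons (x+h) fun j => base j + ((cnt (q.1 j, q.2 j) : Fin 3) : ℝ) * δ j)
           - f (Fin.cons x fun j => base j + ((cnt (q.1 j, q.2 j) : Fin 3) : ℝ) * δ j)))]
  rw [← Equiv.sum_comp (Equiv.arrowProdEquivProdArrow (Fin e) (fun _ => Bool) (fun _ => Bool))
      (fun q : (Fin e → Bool) × (Fin e → Bool) =>
        ((∏ j, sgn (q.1 j)) * (∏ j, sgn (q.2 j))) *
          (f (Fin.cons (x+h) fun j => base j + ((cnt (q.1 j, q.2 j) : Fin 3) : ℝ) * δ j)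
           - f (Fin.cons x fun j => base j + ((cnt (q.1 j, q.2 j) : Fin 3) : ℝ) * δ j)))]
  simp only [Equiv.arrowProdEquivProdArrow, Equiv.coe_fn_mk]
  have hre : ∀ p : Fin e → Bool × Bool,
      ((∏ j, sgn ((p j).1)) * (∏ j, sgn ((p j).2))) *
          (f (Fin.cons (x+h) fun j => base j + ((cnt ((p j).1, (p j).2) : Fin 3) : ℝ) * δ j)
           - f (Fin.cons x fun j => base j + ((cnt ((p j).1, (p j).2) : Fin 3) : ℝ) * δ j))
      = (∏ j, sgn ((p j).1) * sgn ((p j).2)) *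
          ((fun ε : Fin e → Fin 3 =>
            f (Fin.cons (x+h) fun j => base j + ((ε j : Fin 3) : ℝ) * δ j)
            - f (Fin.cons x fun j => base j + ((ε j : Fin 3) : ℝ) * δ j)) (fun j => cnt (p j))) := by
    intro p
    rw [← Finset.prod_mul_distrib]
  rw [Finset.sum_congr rfl fun p _ => hre p]
  rw [sum_fin3 e (fun ε : Fin e → Fin 3 =>
        f (Fin.cons (x+h) fun j => base j + ((ε j : Fin 3) : ℝ) * δ j)
        - f (Fin.cons x fun j => base j + ((ε j : Fin 3) : ℝ) * δ j))]
  rw [← Finset.sum_sub_distrib]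
  exact Finset.sum_congr rfl fun ε _ => by ring

/-- The central estimate on the difference of the alternating sums. -/
lemma main_bound (e : ℕ) (α : ℝ) (f : (Fin (e+1) → ℝ) → ℝ)
    (hmix : MixHolder (e+1) α f) (base δ : Fin e → ℝ)
    (hb0 : ∀ j, 0 ≤ base j) (hd0 : ∀ j, 0 < δ j) (hb2 : ∀ j, base j + 2 * δ j ≤ 1)
    (x h : ℝ) (hx : 0 ≤ x) (hh : 0 ≤ h) (hxh : x + h ≤ 1) :
    |(∑ ε : Fin e → Fin 3, (∏ j, (![(1:ℝ),-2,1]) (ε j)) *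
        f (Fin.cons (x+h) fun j => base j + (ε j : ℝ) * δ j))
      - ∑ ε : Fin e → Fin 3, (∏ j, (![(1:ℝ),-2,1]) (ε j)) *
        f (Fin.cons x fun j => base j + (ε j : ℝ) * δ j)|
    ≤ 2 ^ e * (h ^ α * ∏ j, δ j ^ α) := by
  rw [← key e f x h base δ]
  refine (Finset.abs_sum_le_sum_abs _ _).trans ?_
  have hterm : ∀ σ : Fin e → Bool,
      |(∏ j, sgn (σ j)) *
        ∑ v ∈ (Finset.univ : Finset (Fin (e+1))).powerset,
          (-1:ℝ) ^ ((Finset.univ : Finset (Fin (e+1))).card - v.card) *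
            f (fun i => (Fin.cons x (fun j => base j + if σ j then δ j else 0) : Fin (e+1) → ℝ) i
                + if i ∈ v then (Fin.cons h δ : Fin (e+1) → ℝ) i else 0)|
      ≤ h ^ α * ∏ j, δ j ^ α := by
    intro σ
    rw [abs_mul]
    have h1 : |∏ j, sgn (σ j)| = 1 := by
      rw [Finset.abs_prod]
      refine Finset.prod_eq_one fun j _ => ?_
      cases σ j <;> simp [sgn]
    rw [h1, one_mul]
    have h2 := hmix Finset.univ Finset.univ_nonempty
      (Fin.cons x (fun j => base j + if σ j then δ j else 0)) (Fin.cons h δ)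
      (fun i => by
        refine Fin.cases ?_ ?_ i
        · simpa using hh
        · intro j; simpa using (hd0 j).le)
      (fun i => by
        refine Fin.cases ?_ ?_ i
        · simpa using hx
        · intro j
          simp only [Fin.cons_succ]
          have h4 : (0:ℝ) ≤ if σ j = true then δ j else 0 := by
            split
            exacts [(hd0 j).le, le_rfl]
          exact add_nonneg (hb0 j) h4)
      (fun i => by
        simp only [Finset.mem_univ, if_true]
        refine Fin.cases ?_ ?_ i
        · simpa using hxh
        · intro j
          simp only [Fin.cons_succ]
          have h3 : (if σ j = true then δ j else 0) ≤ δ j := by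
            split
            exacts [le_rfl, (hd0 j).le]
          have := hb2 j
          linarith)
    refine h2.trans (le_of_eq ?_)
    rw [Fin.prod_univ_succ]
    simp
  refine (Finset.sum_le_sum fun σ _ => hterm σ).trans ?_
  rw [Finset.sum_const, Finset.card_univ]
  simp only [nsmul_eq_mul]
  apply le_of_eq
  congr 1
  rw [Fintype.card_fun]
  simp

lemma delta_pos (k : ℕ) : (0:ℝ) < (2:ℝ) ^ (-(k : ℝ) - 1) := Real.rpow_pos_of_pos two_pos _

lemma base_nonneg (k : ℕ) (s : Fin (2^k)) : (0:ℝ) ≤ (2:ℝ) ^ (-(k : ℝ)) * (s : ℝ) :=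
  mul_nonneg (Real.rpow_pos_of_pos two_pos _).le (Nat.cast_nonneg _)

lemma base_two_delta (k : ℕ) (s : Fin (2^k)) :
    (2:ℝ) ^ (-(k : ℝ)) * (s : ℝ) + 2 * (2:ℝ) ^ (-(k : ℝ) - 1) ≤ 1 := by
  have h1 : (2:ℝ) ^ (-(k : ℝ)) = ((2:ℝ) ^ k)⁻¹ := by
    rw [Real.rpow_neg (by norm_num), Real.rpow_natCast]
  have h2 : (2:ℝ) ^ (-(k : ℝ) - 1) = ((2:ℝ) ^ k * 2)⁻¹ := by
    have he : -(k : ℝ) - 1 = -((k : ℝ) + 1) := by ring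
    rw [he, Real.rpow_neg (by norm_num), Real.rpow_add (by norm_num), Real.rpow_natCast,
      Real.rpow_one]
  have hs : (s : ℝ) + 1 ≤ (2:ℝ) ^ k := by
    have h' : (s : ℕ) + 1 ≤ 2 ^ k := s.isLt
    exact_mod_cast h'
  have hp : (0:ℝ) < (2:ℝ) ^ k := by positivity
  rw [h1, h2, mul_inv]
  have h3 : ((2:ℝ) ^ k)⁻¹ * (s : ℝ) + 2 * (((2:ℝ)^k)⁻¹ * 2⁻¹) = ((2:ℝ)^k)⁻¹ * ((s:ℝ) + 1) := by
    ring
  rw [h3]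
  calc ((2:ℝ)^k)⁻¹ * ((s:ℝ) + 1) ≤ ((2:ℝ)^k)⁻¹ * (2:ℝ)^k :=
        mul_le_mul_of_nonneg_left hs (by positivity)
    _ = 1 := inv_mul_cancel₀ (ne_of_gt hp)

lemma prod_cancel (e : ℕ) (α : ℝ) (kb : Fin e → ℕ) :
    (∏ j, (2:ℝ) ^ (α * ((kb j : ℝ) + 1))) *
      (∏ j, ((2:ℝ) ^ (-(kb j : ℝ) - 1)) ^ α) = 1 := by
  rw [← Finset.prod_mul_distrib]
  apply Finset.prod_eq_one
  intro j _
  rw [← Real.rpow_mul (by norm_num : (0:ℝ) ≤ 2), ← Real.rpow_add (by norm_num : (0:ℝ) < 2)]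
  have h0 : α * ((kb j : ℝ) + 1) + (-(kb j : ℝ) - 1) * α = 0 := by ring
  rw [h0, Real.rpow_zero]

/-- Boundary values vanish. -/
lemma boundary (e : ℕ) (α : ℝ) (f : (Fin (e+1) → ℝ) → ℝ)
    (hzero : ∀ x ∈ Set.Icc (0 : Fin (e+1) → ℝ) 1, (∃ i, x i = 0 ∨ x i = 1) → f x = 0)
    (kb : Fin e → ℕ) (sb : (j : Fin e) → Fin (2 ^ kb j))
    (t : ℝ) (ht0 : 0 ≤ t) (ht1 : t ≤ 1) (ht : t = 0 ∨ t = 1) :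
    Kfun e α f kb sb t = 0 := by
  unfold Kfun
  apply mul_eq_zero_of_right
  apply Finset.sum_eq_zero
  intro ε _
  apply mul_eq_zero_of_right
  apply hzero
  · rw [Set.mem_Icc]
    constructor <;> intro i <;>
      refine Fin.cases ?_ ?_ i
    · simpa using ht0
    · intro j
      simp only [Fin.cons_succ, Pi.zero_apply]
      exact add_nonneg (base_nonneg (kb j) (sb j))
        (mul_nonneg (Nat.cast_nonneg _) (delta_pos (kb j)).le)
    · simpa using ht1
    · intro j
      simp only [Fin.cons_succ, Pi.one_apply]
      have hε : ((ε j : ℕ) : ℝ) ≤ 2 := by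
        have := (ε j).isLt
        exact_mod_cast Nat.lt_succ_iff.mp this
      have hd := (delta_pos (kb j)).le
      have := base_two_delta (kb j) (sb j)
      nlinarith
  · exact ⟨0, by simpa using ht⟩

end
end S11

theorem stmt11 (e : ℕ) (he : 1 ≤ e) (α : ℝ) (hα0 : 0 < α) (hα1 : α ≤ 1)
    (m : ℕ) (hm : 1 < m) (f : (Fin (e + 1) → ℝ) → ℝ) (hf : UnitBallH (e + 1) α f)
    (kb : Fin e → ℕ) (sb : (j : Fin e) → Fin (2 ^ kb j)) :
    Kfun e α f kb sb 0 = 0 ∧ Kfun e α f kb sb 1 = 0 ∧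
    ∀ x h : ℝ, 0 ≤ x → 0 ≤ h → x + h ≤ 1 →
      |Kfun e α f kb sb (x + h) - Kfun e α f kb sb x| ≤ h ^ α := by
  obtain ⟨-, -, hzero, hmix⟩ := hf
  refine ⟨S11.boundary e α f hzero kb sb 0 le_rfl zero_le_one (Or.inl rfl),
          S11.boundary e α f hzero kb sb 1 zero_le_one le_rfl (Or.inr rfl), ?_⟩
  intro x h hx hh hxh
  have hmb := S11.main_bound e α f hmix
    (fun j => (2:ℝ) ^ (-(kb j : ℝ)) * (sb j : ℝ))
    (fun j => (2:ℝ) ^ (-(kb j : ℝ) - 1))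
    (fun j => S11.base_nonneg (kb j) (sb j))
    (fun j => S11.delta_pos (kb j))
    (fun j => S11.base_two_delta (kb j) (sb j))
    x h hx hh hxh
  unfold Kfun
  rw [← mul_sub, abs_mul]
  have hP : (0:ℝ) < ∏ j, (2:ℝ) ^ (α * ((kb j : ℝ) + 1)) :=
    Finset.prod_pos fun j _ => Real.rpow_pos_of_pos two_pos _
  have hC : |(-(1:ℝ)/2) ^ e * ∏ j, (2:ℝ) ^ (α * ((kb j : ℝ) + 1))|
      = (1/2:ℝ) ^ e * ∏ j, (2:ℝ) ^ (α * ((kb j : ℝ) + 1)) := by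
    have ha : |(-(1:ℝ)/2)| = 1/2 := by norm_num
    rw [abs_mul, abs_pow, abs_of_pos hP, ha]
  rw [hC]
  calc ((1/2:ℝ) ^ e * ∏ j, (2:ℝ) ^ (α * ((kb j : ℝ) + 1))) *
        |(∑ ε : Fin e → Fin 3, (∏ j, (![(1 : ℝ), -2, 1]) (ε j)) *
          f (Fin.cons (x + h) fun j =>
            (2 : ℝ) ^ (-(kb j : ℝ)) * (sb j : ℝ) + (ε j : ℝ) * (2 : ℝ) ^ (-(kb j : ℝ) - 1)))
          - ∑ ε : Fin e → Fin 3, (∏ j, (![(1 : ℝ), -2, 1]) (ε j)) *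
          f (Fin.cons x fun j =>
            (2 : ℝ) ^ (-(kb j : ℝ)) * (sb j : ℝ) + (ε j : ℝ) * (2 : ℝ) ^ (-(kb j : ℝ) - 1))|
      ≤ ((1/2:ℝ) ^ e * ∏ j, (2:ℝ) ^ (α * ((kb j : ℝ) + 1))) *
          (2 ^ e * (h ^ α * ∏ j, ((2:ℝ) ^ (-(kb j : ℝ) - 1)) ^ α)) := by
        apply mul_le_mul_of_nonneg_left _ (by positivity)
        exact hmb
    _ = h ^ α := by
        have h12 : ((1/2:ℝ)) ^ e * 2 ^ e = 1 := by
          rw [← mul_pow]; norm_num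
        have hPD := S11.prod_cancel e α kb
        calc ((1/2:ℝ) ^ e * ∏ j, (2:ℝ) ^ (α * ((kb j : ℝ) + 1))) *
              (2 ^ e * (h ^ α * ∏ j, ((2:ℝ) ^ (-(kb j : ℝ) - 1)) ^ α))
            = (((1/2:ℝ)) ^ e * 2 ^ e) *
                ((∏ j, (2:ℝ) ^ (α * ((kb j : ℝ) + 1))) *
                  ∏ j, ((2:ℝ) ^ (-(kb j : ℝ) - 1)) ^ α) * h ^ α := by ring
          _ = h ^ α := by rw [h12, hPD]; ring
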